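/- For tagged trees w_1 = c_1^A(w_{1,1},...,w_{1,p}) and w_2 = c_2^B(w_{2,1},...,w_{2,q}), define w_1 * w_2 to be c_1^{A∩B}(w_{1,1}*w_{2,1}, ..., w_{1,p}*w_{2,p}) when c_1 = c_2 (so p = q), and c_1^{(A∩B)\{∘}}(w_{1,1},...,w_{1,p}) otherwise. Then ℓ(w_1 * w_2) = ℓ(w_1) ∩ ℓ(w_2). -/

import Mathlib

/-- Linear expressions over `n` variables: trees built from variables `x i` and
constructor applications `c(e₁,...,e_k)` (constructors named by naturals). -/
inductive LinExpr (n : ℕ) : Type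
  | var : Fin n → LinExpr n
  | cons : ℕ → List (LinExpr n) → LinExpr n

/-- Tagged trees (ℓ-values): each node carries a constructor symbol and a tag,
a finite subset of `{∘, 1, ..., n}` modelled as `Finset (Option (Fin n))`
(`none` playing the role of `∘`). -/
inductive TaggedTree (n : ℕ) : Type
  | node : ℕ → Finset (Option (Fin n)) → List (TaggedTree n) → TaggedTree n

/-- Membership in the set `ℓ(w)` of linear expressions extracted from a tagged tree:
`ℓ(c^A(w₁,...,w_k)) = {x i | i ∈ A} ∪ ({c(e₁,...,e_k) | e_i ∈ ℓ(w_i)} if ∘ ∈ A else ∅)`. -/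
inductive EllMem {n : ℕ} : LinExpr n → TaggedTree n → Prop
  | var {i : Fin n} {c A ws} (hi : some i ∈ A) :
      EllMem (.var i) (.node c A ws)
  | cons {c A ws es} (hc : none ∈ A) (hes : List.Forall₂ EllMem es ws) :
      EllMem (.cons c es) (.node c A ws)

/-- The set `ℓ(w)` of linear expressions extracted from a tagged tree `w`. -/
def ell {n : ℕ} (w : TaggedTree n) : Set (LinExpr n) := {e | EllMem e w}

mutual
/-- The intersection operation `w₁ * w₂` on tagged trees:
`c₁^A(w₁s) * c₂^B(w₂s)` is `c₁^{A∩B}(zipWith (*) w₁s w₂s)` when `c₁ = c₂`,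
and `c₁^{(A∩B)\{∘}}(w₁s)` otherwise. -/
def star {n : ℕ} : TaggedTree n → TaggedTree n → TaggedTree n
  | .node c₁ A ws₁, .node c₂ B ws₂ =>
      if c₁ = c₂ then .node c₁ (A ∩ B) (starList ws₁ ws₂)
      else .node c₁ ((A ∩ B).erase none) ws₁

/-- Pointwise `star` on lists (i.e. `List.zipWith star`). -/
def starList {n : ℕ} : List (TaggedTree n) → List (TaggedTree n) → List (TaggedTree n)
  | w₁ :: t₁, w₂ :: t₂ => star w₁ w₂ :: starList t₁ t₂
  | _, _ => []
end

/-- Well-formedness with respect to an arity assignment `ar`: every node labeled `c`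
has exactly `ar c` children.  In particular, any two well-formed trees with equal
constructors at the root have equal arity. -/
inductive TreeWF {n : ℕ} (ar : ℕ → ℕ) : TaggedTree n → Prop
  | node {c A ws} (hlen : ws.length = ar c) (hws : ∀ w ∈ ws, TreeWF ar w) :
      TreeWF ar (.node c A ws)

lemma star_node {n : ℕ} (c₁ c₂ : ℕ) (A B : Finset (Option (Fin n))) (ws₁ ws₂ : List (TaggedTree n)) :
    star (TaggedTree.node c₁ A ws₁) (TaggedTree.node c₂ B ws₂) =
      if c₁ = c₂ then .node c₁ (A ∩ B) (starList ws₁ ws₂)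
      else .node c₁ ((A ∩ B).erase none) ws₁ := by
  rw [_root_.star]

lemma forall2_starList {n : ℕ} {ws₁ ws₂ : List (TaggedTree n)}
    (H : List.Forall₂ (fun a b => ∀ e, EllMem e (star a b) ↔ EllMem e a ∧ EllMem e b) ws₁ ws₂) :
    ∀ es : List (LinExpr n), List.Forall₂ EllMem es (starList ws₁ ws₂) ↔
      List.Forall₂ EllMem es ws₁ ∧ List.Forall₂ EllMem es ws₂ := by
  induction H with
  | nil => intro es; simp [starList]
  | @cons a b l₁ l₂ h _ ih =>
    intro es
    cases es with
    | nil =>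
      constructor
      · rintro ⟨⟩
      · rintro ⟨⟨⟩, _⟩
    | cons e es =>
      simp only [starList, List.forall₂_cons, h, ih]
      tauto

lemma ellMem_star {n : ℕ} (ar : ℕ → ℕ) : ∀ (w₁ w₂ : TaggedTree n),
    TreeWF ar w₁ → TreeWF ar w₂ →
    ∀ e, EllMem e (star w₁ w₂) ↔ EllMem e w₁ ∧ EllMem e w₂
  | .node c₁ A ws₁, .node c₂ B ws₂, h₁, h₂, e => by
    obtain ⟨hlen₁, hws₁⟩ : ws₁.length = ar c₁ ∧ ∀ w ∈ ws₁, TreeWF ar w := by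
      cases h₁ with | node hl hw => exact ⟨hl, hw⟩
    obtain ⟨hlen₂, hws₂⟩ : ws₂.length = ar c₂ ∧ ∀ w ∈ ws₂, TreeWF ar w := by
      cases h₂ with | node hl hw => exact ⟨hl, hw⟩
    by_cases hc : c₁ = c₂
    · subst hc
      have hlen : ws₁.length = ws₂.length := hlen₁.trans hlen₂.symm
      have key : ∀ a ∈ ws₁, ∀ b ∈ ws₂,
          ∀ e, EllMem e (star a b) ↔ EllMem e a ∧ EllMem e b := fun a ha b hb =>
        ellMem_star ar a b (hws₁ a ha) (hws₂ b hb)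
      have H : List.Forall₂ (fun a b => ∀ e, EllMem e (star a b) ↔ EllMem e a ∧ EllMem e b)
          ws₁ ws₂ := by
        rw [List.forall₂_iff_get]
        exact ⟨hlen, fun i h1 h2 => key _ (ws₁.get_mem _) _ (ws₂.get_mem _)⟩
      rw [star_node, if_pos rfl]
      constructor
      · intro h
        cases h with
        | var hi =>
          rw [Finset.mem_inter] at hi
          exact ⟨.var hi.1, .var hi.2⟩
        | cons hc' hes =>
          rw [Finset.mem_inter] at hc'
          obtain ⟨ha, hb⟩ := (forall2_starList H _).1 hes
          exact ⟨.cons hc'.1 ha, .cons hc'.2 hb⟩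
      · rintro ⟨ha, hb⟩
        cases ha with
        | var hi =>
          cases hb with
          | var hi' => exact .var (Finset.mem_inter.2 ⟨hi, hi'⟩)
        | cons hc' hes =>
          cases hb with
          | cons hc'' hes' =>
            exact .cons (Finset.mem_inter.2 ⟨hc', hc''⟩) ((forall2_starList H _).2 ⟨hes, hes'⟩)
    · rw [star_node, if_neg hc]
      constructor
      · intro h
        cases h with
        | var hi =>
          rw [Finset.mem_erase, Finset.mem_inter] at hi
          exact ⟨.var hi.2.1, .var hi.2.2⟩
        | cons hc' hes =>
          exact absurd (Finset.mem_erase.1 hc').1 (by simp)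
      · rintro ⟨ha, hb⟩
        cases ha with
        | var hi =>
          cases hb with
          | var hi' =>
            exact .var (Finset.mem_erase.2 ⟨by simp, Finset.mem_inter.2 ⟨hi, hi'⟩⟩)
        | cons hc' hes => cases hb with | cons hc'' hes' => exact absurd rfl hc
termination_by w₁ => sizeOf w₁
decreasing_by
  have h1 := List.sizeOf_lt_of_mem ha
  simp only [TaggedTree.node.sizeOf_spec]
  omega

/-- For well-formed tagged trees `w₁` and `w₂`, `ℓ(w₁ * w₂) = ℓ(w₁) ∩ ℓ(w₂)`. -/
theorem ell_star {n : ℕ} (ar : ℕ → ℕ) (w₁ w₂ : TaggedTree n)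
    (h₁ : TreeWF ar w₁) (h₂ : TreeWF ar w₂) :
    ell (star w₁ w₂) = ell w₁ ∩ ell w₂ := by
  ext e
  exact ellMem_star ar w₁ w₂ h₁ h₂ e
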